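/- Let G be a tree graph and (r1,r2) an edge of G; removing this edge yields subtrees G1 (containing r1) and G2 (containing r2). For every M1 ∈ MEC(G1,r1,1) and M2 ∈ MEC(G2,r2,1), the number of MECs M of G with P(M, V_{G1}, V_{G2}) = (M1, M2) is exactly two, and both of these MECs belong to MEC(G,r1,1). -/

import Mathlib

/-! Common definitions: mixed graphs, Markov equivalence classes (MECs),
partial MECs, projections, extensions, and counting classes. -/

/-- A mixed graph on a vertex type `V`: an irreflexive edge relation. -/
structure MixedGraph (V : Type*) where
  E : V → V → Prop
  irrefl : ∀ v, ¬ E v v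

namespace MixedGraph

variable {V : Type*}

/-- `u — v` : undirected edge of `M`. -/
def undirE (M : MixedGraph V) (u v : V) : Prop := M.E u v ∧ M.E v u

/-- `u → v` : directed edge of `M`. -/
def dirE (M : MixedGraph V) (u v : V) : Prop := M.E u v ∧ ¬ M.E v u

/-- `u` and `v` are adjacent in `M` (joined by some edge). -/
def adjE (M : MixedGraph V) (u v : V) : Prop := M.E u v ∨ M.E v u

/-- The skeleton of a mixed graph: replace every directed edge by an undirected one. -/
def skeleton (M : MixedGraph V) : SimpleGraph V where
  Adj u v := M.adjE u v
  symm := by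
    constructor
    intro u v h
    exact Or.symm h
  loopless := by
    constructor
    intro v h
    rcases h with h | h <;> exact M.irrefl v h

/-- The undirected part of a mixed graph, as a simple graph. -/
def undirGraph (M : MixedGraph V) : SimpleGraph V where
  Adj u v := M.undirE u v
  symm := by
    constructor
    intro u v h
    exact ⟨h.2, h.1⟩
  loopless := by
    constructor
    intro v h
    exact M.irrefl v h.1

/-- `M` is a chain graph: no directed cycle, i.e. no cycle
`u_1, …, u_l, u_1` (`l ≥ 2`, vertices distinct) in which every consecutive pair is joined
by an undirected or forward-directed edge and at least one edge is directed. -/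
def IsChainGraph (M : MixedGraph V) : Prop :=
  ∀ (l : ℕ) (f : ZMod l → V), 2 ≤ l → Function.Injective f →
    (∀ i, M.E (f i) (f (i + 1))) → ∀ i, ¬ M.dirE (f i) (f (i + 1))

/-- `a → b ← c` is a v-structure of `M` (in particular `a`, `c` non-adjacent). -/
def vstruct (M : MixedGraph V) (a b c : V) : Prop :=
  M.dirE a b ∧ M.dirE c b ∧ ¬ M.adjE a c

/-- The set of v-structures of `M`, as ordered triples `(a, b, c)` with `a → b ← c`. -/
def vstructs (M : MixedGraph V) : Set (V × V × V) :=
  {t | M.vstruct t.1 t.2.1 t.2.2}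

/-- The directed edge `u → v` is strongly protected in `M`: it occurs in an induced
subgraph of one of the four forms (a) `w→u→v` (`w`,`v` non-adjacent);
(b) `u→v←w` (`u`,`w` non-adjacent); (c) `u→w`, `w→v`, `u→v`;
(d) `w→v`, `w'→v`, `w—u`, `w'—u`, `u→v` (`w`,`w'` non-adjacent). -/
def StronglyProtected (M : MixedGraph V) (u v : V) : Prop :=
  (∃ w, M.dirE w u ∧ ¬ M.adjE w v) ∨
  (∃ w, M.dirE w v ∧ ¬ M.adjE u w) ∨
  (∃ w, M.dirE u w ∧ M.dirE w v) ∨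
  (∃ w w', w ≠ w' ∧ M.undirE w u ∧ M.undirE w' u ∧ M.dirE w v ∧ M.dirE w' v ∧
    ¬ M.adjE w w')

/-- The induced mixed subgraph of `M` on the vertex set `X`, kept on the same vertex
type (vertices outside `X` become isolated). -/
def induce (M : MixedGraph V) (X : Set V) : MixedGraph V where
  E u v := u ∈ X ∧ v ∈ X ∧ M.E u v
  irrefl := by
    intro v h
    exact M.irrefl v h.2.2

end MixedGraph

namespace SimpleGraph

variable {V : Type*}

/-- A simple graph is chordal: every cycle of length at least `4` has a chord
(an edge between two non-consecutive vertices of the cycle). -/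
def IsChordalGraph (G : SimpleGraph V) : Prop :=
  ∀ (l : ℕ) (f : ZMod l → V), 4 ≤ l → Function.Injective f →
    (∀ i, G.Adj (f i) (f (i + 1))) →
    ∃ i j : ZMod l, j ≠ i + 1 ∧ i ≠ j + 1 ∧ G.Adj (f i) (f j)

/-- The induced subgraph of `G` on the vertex set `X`, kept on the same vertex type
(vertices outside `X` become isolated). -/
def inducedOn (G : SimpleGraph V) (X : Set V) : SimpleGraph V where
  Adj u v := u ∈ X ∧ v ∈ X ∧ G.Adj u v
  symm := by
    constructor
    intro u v h
    exact ⟨h.2.1, h.1, h.2.2.symm⟩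
  loopless := by
    constructor
    intro v h
    exact G.loopless.irrefl v h.2.2

/-- The set of neighbours in `G` of vertices of `S`. -/
def nbhdSet (G : SimpleGraph V) (S : Set V) : Set V :=
  {v | ∃ u ∈ S, G.Adj u v}

/-- View an undirected graph as a mixed graph all of whose edges are undirected. -/
def toMixed (G : SimpleGraph V) : MixedGraph V :=
  ⟨G.Adj, fun v h => G.loopless.irrefl v h⟩

end SimpleGraph

namespace MixedGraph

variable {V : Type*}

/-- `M` is (the graphical representation of) a Markov equivalence class, by the
Andersson–Madigan–Perlman characterization: (1) `M` is a chain graph; (2) every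
undirected connected component of `M` is chordal; (3) `M` has no induced subgraph
`a→b—c`; (4) every directed edge of `M` is strongly protected. -/
def IsMEC (M : MixedGraph V) : Prop :=
  M.IsChainGraph ∧
  M.undirGraph.IsChordalGraph ∧
  (∀ a b c, M.dirE a b → M.undirE b c → M.adjE a c) ∧
  (∀ u v, M.dirE u v → M.StronglyProtected u v)

/-- `M` is a partial MEC: conditions (1)–(3) of the MEC characterization. -/
def IsPartialMEC (M : MixedGraph V) : Prop :=
  M.IsChainGraph ∧
  M.undirGraph.IsChordalGraph ∧
  (∀ a b c, M.dirE a b → M.undirE b c → M.adjE a c)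

end MixedGraph

/-- `MEC(G)` : the set of MECs with skeleton `G`. -/
def MECset {V : Type*} (G : SimpleGraph V) : Set (MixedGraph V) :=
  {M | M.IsMEC ∧ M.skeleton = G}

/-- `PMEC(G)` : the set of partial MECs with skeleton `G`. -/
def PMECset {V : Type*} (G : SimpleGraph V) : Set (MixedGraph V) :=
  {M | M.IsPartialMEC ∧ M.skeleton = G}

/-- `M' = P(M, Y)` : `M'` is the projection of `M` on the vertex set `Y`, i.e. the
(unique) MEC of the induced subgraph on `Y` whose set of v-structures equals that
of `M[Y]`. -/
def IsProjection {V : Type*} (M : MixedGraph V) (Y : Set V) (M' : MixedGraph V) : Prop :=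
  M' ∈ MECset (M.skeleton.inducedOn Y) ∧ M'.vstructs = (M.induce Y).vstructs

/-- `MEC(G, r, 1)` : MECs of `G` that contain a directed edge into `r`. -/
def MEC1 {V : Type*} (G : SimpleGraph V) (r : V) : Set (MixedGraph V) :=
  {M ∈ MECset G | ∃ x, M.dirE x r}

/-- `MEC(G, r, 0, i)` : MECs of `G` with no directed edge into `r` and exactly `i`
undirected edges incident to `r`. -/
def MEC0 {V : Type*} (G : SimpleGraph V) (r : V) (i : ℕ) : Set (MixedGraph V) :=
  {M ∈ MECset G | (¬ ∃ x, M.dirE x r) ∧ {x | M.undirE r x}.ncard = i}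

/-- The degree of `r` in `G`. -/
noncomputable def degS {V : Type*} (G : SimpleGraph V) (r : V) : ℕ :=
  {x | G.Adj r x}.ncard

/-- `n_1(G, r) = |MEC(G, r, 1)|`. -/
noncomputable def n1count {V : Type*} (G : SimpleGraph V) (r : V) : ℕ :=
  (MEC1 G r).ncard

/-- `n_0^i(G, r) = |MEC(G, r, 0, i)|`. -/
noncomputable def n0count {V : Type*} (G : SimpleGraph V) (r : V) (i : ℕ) : ℕ :=
  (MEC0 G r i).ncard

/-- `n_0(G, r) = Σ_{i = 0}^{δ} n_0^i(G, r)`, where `δ` is the degree of `r` in `G`. -/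
noncomputable def n0total {V : Type*} (G : SimpleGraph V) (r : V) : ℕ :=
  ∑ i ∈ Finset.range (degS G r + 1), n0count G r i

/-- The set of vertices lying on the `r1` side after cutting the edge `r1 — r2` of `G`
(i.e. the vertices reachable from `r1` in `G` with the edge `r1 — r2` deleted). -/
def cutSide {V : Type*} (G : SimpleGraph V) (r1 r2 : V) : Set V :=
  {v | (G.deleteEdges {s(r1, r2)}).Reachable r1 v}

/-- `MEC(G, O)` : the MECs of `G` whose induced subgraph on `X` (the vertex set of
`O`) equals `O`. -/
def MECwith {V : Type*} (G : SimpleGraph V) (O : MixedGraph V) (X : Set V) :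
    Set (MixedGraph V) :=
  {M ∈ MECset G | M.induce X = O}

/-- `O ∈ E(O1, O2)` : `O` is an extension of `(O1, O2)` (where `X1`, `X2` are the
vertex sets of `O1`, `O2`): for each `a ∈ {1,2}`, (i) every directed edge of `O_a` is a
directed edge of `O`; (ii) `V(O_a) = V(O[V_{O_a}])`; (iii) every undirected edge of
`O_a` that is directed in `O` is strongly protected in `O`. -/
def IsExtension {V : Type*} (O O1 O2 : MixedGraph V) (X1 X2 : Set V) : Prop :=
  (∀ u v, O1.dirE u v → O.dirE u v) ∧
  (∀ u v, O2.dirE u v → O.dirE u v) ∧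
  O1.vstructs = (O.induce X1).vstructs ∧
  O2.vstructs = (O.induce X2).vstructs ∧
  (∀ u v, O1.undirE u v → O.dirE u v → O.StronglyProtected u v) ∧
  (∀ u v, O2.undirE u v → O.dirE u v → O.StronglyProtected u v)

/-- The v-structure (recorded as the ordered triple `t = (a, b, c)` with `a → b ← c`)
contains the directed edge `x → y`. -/
def vstructContains {V : Type*} (t : V × V × V) (x y : V) : Prop :=
  (t.1 = x ∧ t.2.1 = y) ∨ (t.2.2 = x ∧ t.2.1 = y)


section AuxGraph

open SimpleGraph

variable {V : Type*}

lemma acyclic_path_length_unique {G : SimpleGraph V} (hG : G.IsAcyclic) {u v : V}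
    {p q : G.Walk u v} (hp : p.IsPath) (hq : q.IsPath) : p.length = q.length := by
  have h := (isAcyclic_iff_path_unique.mp hG) ⟨p, hp⟩ ⟨q, hq⟩
  exact congrArg (fun r : G.Path u v => (r : G.Walk u v).length) h

lemma tree_no_triangle {G : SimpleGraph V} (hG : G.IsAcyclic) {a b c : V}
    (hab : G.Adj a b) (hbc : G.Adj b c) (hac : G.Adj a c) : False := by
  have h1 : (Walk.cons hac Walk.nil).IsPath := by
    simp [Walk.cons_isPath_iff, hac.ne]
  have h2 : (Walk.cons hab (Walk.cons hbc Walk.nil)).IsPath := by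
    simp [Walk.cons_isPath_iff, hab.ne, hbc.ne, hac.ne]
  have := acyclic_path_length_unique hG h1 h2
  simp [Walk.length_cons] at this

lemma no_cycle_fun {G : SimpleGraph V} (hG : G.IsAcyclic) (l : ℕ) (hl : 3 ≤ l)
    (f : ZMod l → V) (hinj : Function.Injective f)
    (hadj : ∀ i, G.Adj (f i) (f (i + 1))) : False := by
  set g : ℕ → V := fun n => f (n : ZMod l) with hg
  have hadj' : ∀ n : ℕ, G.Adj (g n) (g (n + 1)) := by
    intro n
    have := hadj (n : ZMod l)
    simpa [hg, Nat.cast_add] using this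
  let w : ∀ n : ℕ, G.Walk (g 0) (g n) := fun n =>
    Nat.rec Walk.nil (fun n p => p.concat (hadj' n)) n
  have hwsucc : ∀ n : ℕ, w (n + 1) = (w n).concat (hadj' n) := fun n => rfl
  have hsupp : ∀ n, (w n).support = (List.range (n + 1)).map g := by
    intro n
    induction n with
    | zero => simp [w, List.range_succ]
    | succ n ih =>
      rw [hwsucc, Walk.support_concat, ih]
      simp [List.range_succ]
  have hlen : ∀ n, (w n).length = n := by
    intro n
    induction n with
    | zero => rfl
    | succ n ih => rw [hwsucc, Walk.length_concat, ih]
  have hginj : ∀ a < l, ∀ b < l, g a = g b → a = b := by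
    intro a ha b hb h
    have h2 := hinj h
    have ha' := ZMod.val_natCast_of_lt ha
    have hb' := ZMod.val_natCast_of_lt hb
    rw [← ha', ← hb', h2]
  have hll : l - 1 + 1 = l := by omega
  have hpath : (w (l - 1)).IsPath := by
    rw [Walk.isPath_def, hsupp, hll]
    refine List.Nodup.map_on ?_ List.nodup_range
    intro a ha b hb h
    exact hginj a (List.mem_range.mp ha) b (List.mem_range.mp hb) h
  have hg0 : g l = g 0 := by simp [hg]
  have he : G.Adj (g 0) (g (l - 1)) := by
    have := hadj' (l - 1)
    rw [hll, hg0] at this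
    exact this.symm
  have hshort : (Walk.cons he Walk.nil).IsPath := by
    simp [Walk.cons_isPath_iff]
    intro h
    exact he.ne h
  have hfin := acyclic_path_length_unique hG hpath hshort
  rw [hlen] at hfin
  simp [Walk.length_cons] at hfin
  omega

lemma chainGraph_of_acyclic {G : SimpleGraph V} (hG : G.IsAcyclic)
    (M : MixedGraph V) (hsub : ∀ u v, M.E u v → G.Adj u v) : M.IsChainGraph := by
  intro l f hl hinj hE i hdir
  by_cases h3 : 3 ≤ l
  · exact no_cycle_fun hG l h3 f hinj (fun j => hsub _ _ (hE j))
  · have hl2 : l = 2 := by omega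
    subst hl2
    have h2 : i + 1 + 1 = i := by
      have : (2 : ZMod 2) = 0 := rfl
      calc i + 1 + 1 = i + 2 := by ring
        _ = i := by rw [this, add_zero]
    have hback := hE (i + 1)
    rw [h2] at hback
    exact hdir.2 hback

lemma chordal_of_acyclic {G : SimpleGraph V} (hG : G.IsAcyclic)
    {A : SimpleGraph V} (hsub : A ≤ G) : A.IsChordalGraph := by
  intro l f hl hinj hadj
  exact (no_cycle_fun hG l (by omega) f hinj (fun i => hsub (hadj i))).elim

end AuxGraph
section AuxMixed

open SimpleGraph

variable {V : Type*}

lemma MixedGraph.ext' {A B : MixedGraph V} (h : ∀ u v, A.E u v ↔ B.E u v) : A = B := by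
  cases A; cases B
  simp only [MixedGraph.mk.injEq]
  funext u v
  exact propext (h u v)

lemma dirE_iff_mem_vstructs (A : MixedGraph V) (a b : V) :
    A.dirE a b ↔ (a, b, a) ∈ A.vstructs := by
  constructor
  · intro h
    exact ⟨h, h, fun hc => A.irrefl a (hc.elim id id)⟩
  · intro h
    exact h.1

lemma MixedGraph.E_iff_adj_not_dir (C : MixedGraph V) (u v : V) :
    C.E u v ↔ C.adjE u v ∧ ¬ C.dirE v u := by
  constructor
  · intro h
    exact ⟨Or.inl h, fun hd => hd.2 h⟩
  · rintro ⟨hadj | hadj, hnd⟩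
    · exact hadj
    · by_contra h
      exact hnd ⟨hadj, h⟩

lemma MixedGraph.eq_of_skeleton_of_dirE {A B : MixedGraph V}
    (hs : ∀ u v, A.adjE u v ↔ B.adjE u v) (hd : ∀ u v, A.dirE u v ↔ B.dirE u v) : A = B := by
  apply MixedGraph.ext'
  intro u v
  rw [MixedGraph.E_iff_adj_not_dir, MixedGraph.E_iff_adj_not_dir, hs u v, hd v u]

lemma dirE_of_induce {M : MixedGraph V} {X : Set V} {u v : V}
    (h : (M.induce X).dirE u v) : M.dirE u v := by
  obtain ⟨⟨h1, h2, h3⟩, hn⟩ := h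
  exact ⟨h3, fun hh => hn ⟨h2, h1, hh⟩⟩

end AuxMixed

section AuxCut

open SimpleGraph

variable {V : Type*} {G : SimpleGraph V} {r1 r2 : V}

lemma cutSide_self (G : SimpleGraph V) (r1 r2 : V) : r1 ∈ cutSide G r1 r2 :=
  SimpleGraph.Reachable.refl r1

lemma cutSide_extend {v w : V} (hv : v ∈ cutSide G r1 r2)
    (h : G.Adj v w) (hne : s(v, w) ≠ s(r1, r2)) : w ∈ cutSide G r1 r2 := by
  have hvw : (G.deleteEdges {s(r1, r2)}).Adj v w := by
    rw [SimpleGraph.deleteEdges_adj]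
    exact ⟨h, by simpa using hne⟩
  exact SimpleGraph.Reachable.trans hv hvw.reachable

lemma cutSide_cover (hT : G.IsTree) (v : V) :
    v ∈ cutSide G r1 r2 ∨ v ∈ cutSide G r2 r1 := by
  suffices h : ∀ (a b : V), G.Walk a b → a ∈ cutSide G r1 r2 ∨ a ∈ cutSide G r2 r1 →
      b ∈ cutSide G r1 r2 ∨ b ∈ cutSide G r2 r1 by
    obtain ⟨p⟩ := hT.isConnected.preconnected r1 v
    exact h r1 v p (Or.inl (cutSide_self G r1 r2))
  intro a b p
  induction p with
  | nil => exact id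
  | @cons a c b h p ih =>
    intro ha
    apply ih
    by_cases he : s(a, c) = s(r1, r2)
    · rw [Sym2.eq_iff] at he
      rcases he with ⟨h1, h2⟩ | ⟨h1, h2⟩
      · exact Or.inr (by rw [h2]; exact cutSide_self G r2 r1)
      · exact Or.inl (by rw [h2]; exact cutSide_self G r1 r2)
    · rcases ha with ha | ha
      · exact Or.inl (cutSide_extend ha h he)
      · exact Or.inr (cutSide_extend ha h (fun hh => he (hh.trans Sym2.eq_swap)))

lemma cutSide_disjoint [DecidableEq V] (hT : G.IsTree) (hadj : G.Adj r1 r2) (v : V)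
    (h1 : v ∈ cutSide G r1 r2) (h2 : v ∈ cutSide G r2 r1) : False := by
  have h2' : (G.deleteEdges {s(r1, r2)}).Reachable r2 v := by
    have : ({s(r2, r1)} : Set (Sym2 V)) = {s(r1, r2)} := by rw [Sym2.eq_swap]
    rw [← this]
    exact h2
  have hr : (G.deleteEdges {s(r1, r2)}).Reachable r1 r2 :=
    SimpleGraph.Reachable.trans h1 h2'.symm
  obtain ⟨p0⟩ := hr
  let q := p0.toPath
  have hE : ∀ e ∈ (q : (G.deleteEdges {s(r1, r2)}).Walk r1 r2).edges, e ∈ G.edgeSet := by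
    intro e he
    have h := SimpleGraph.Walk.edges_subset_edgeSet _ he
    rw [SimpleGraph.edgeSet_deleteEdges] at h
    exact h.1
  have hnot : s(r1, r2) ∉ (q : (G.deleteEdges {s(r1, r2)}).Walk r1 r2).edges := by
    intro hmem
    have h := SimpleGraph.Walk.edges_subset_edgeSet _ hmem
    rw [SimpleGraph.edgeSet_deleteEdges] at h
    exact h.2 rfl
  have hqpath : ((q : (G.deleteEdges {s(r1, r2)}).Walk r1 r2).transfer G hE).IsPath :=
    q.2.transfer hE
  have huniq := (SimpleGraph.isAcyclic_iff_path_unique.mp hT.IsAcyclic)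
    ⟨_, hqpath⟩ (SimpleGraph.Path.singleton hadj)
  have hvals : (q : (G.deleteEdges {s(r1, r2)}).Walk r1 r2).transfer G hE
      = (SimpleGraph.Path.singleton hadj : G.Walk r1 r2) :=
    congrArg Subtype.val huniq
  have hmem : s(r1, r2) ∈ ((q : (G.deleteEdges {s(r1, r2)}).Walk r1 r2).transfer G hE).edges := by
    rw [hvals]
    simp [SimpleGraph.Path.singleton]
  rw [SimpleGraph.Walk.edges_transfer] at hmem
  exact hnot hmem

lemma cut_crossing [DecidableEq V] (hT : G.IsTree) (hadj : G.Adj r1 r2) {u v : V}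
    (hu : u ∈ cutSide G r1 r2) (hv : v ∈ cutSide G r2 r1) (huv : G.Adj u v) :
    u = r1 ∧ v = r2 := by
  by_cases he : s(u, v) = s(r1, r2)
  · rw [Sym2.eq_iff] at he
    rcases he with h | ⟨h1, h2⟩
    · exact h
    · exact (cutSide_disjoint hT hadj u hu
        (by rw [h1]; exact cutSide_self G r2 r1)).elim
  · exact (cutSide_disjoint hT hadj v (cutSide_extend hu huv he) hv).elim

end AuxCut
section Build

open SimpleGraph

variable {V : Type*}

/-- Join two mixed graphs across a cut, adding the directed edge `r1 → r2`. -/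
def crossJoin (M1 M2 : MixedGraph V) (r1 r2 : V) (h : r1 ≠ r2) : MixedGraph V :=
  ⟨fun u v => M1.E u v ∨ M2.E u v ∨ (u = r1 ∧ v = r2), by
    intro v hv
    rcases hv with hv | hv | ⟨e1, e2⟩
    · exact M1.irrefl v hv
    · exact M2.irrefl v hv
    · exact h (e1.symm.trans e2)⟩

lemma crossJoin_E (M1 M2 : MixedGraph V) (r1 r2 : V) (h : r1 ≠ r2) (u v : V) :
    (crossJoin M1 M2 r1 r2 h).E u v ↔ (M1.E u v ∨ M2.E u v ∨ (u = r1 ∧ v = r2)) := Iff.rfl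

lemma build_MEC {G : SimpleGraph V} (hT : G.IsTree)
    {r1 r2 : V} (hadj : G.Adj r1 r2)
    {V1 V2 : Set V} (ha1 : r1 ∈ V1) (ha2 : r2 ∈ V2)
    (hdisj : ∀ v, v ∈ V1 → v ∈ V2 → False)
    (hcover : ∀ v, v ∈ V1 ∨ v ∈ V2)
    (hcross : ∀ u v, G.Adj u v → u ∈ V1 → v ∈ V2 → u = r1 ∧ v = r2)
    {M1 M2 : MixedGraph V}
    (hM1skel : M1.skeleton = G.inducedOn V1) (hM1mec : M1.IsMEC)
    (hM2skel : M2.skeleton = G.inducedOn V2) (hM2mec : M2.IsMEC)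
    {x1 x2 : V} (hx1 : M1.dirE x1 r1) (hx2 : M2.dirE x2 r2)
    (K : MixedGraph V)
    (hK : ∀ u v, K.E u v ↔ (M1.E u v ∨ M2.E u v ∨ (u = r1 ∧ v = r2))) :
    K ∈ MECset G ∧ K.induce V1 = M1 ∧ K.induce V2 = M2 ∧ K.dirE r1 r2 ∧ ¬ K.E r2 r1 := by
  have hr12 : r1 ≠ r2 := hadj.ne
  have hM1edge : ∀ {u v}, M1.E u v → u ∈ V1 ∧ v ∈ V1 ∧ G.Adj u v := by
    intro u v h
    have h2 : M1.skeleton.Adj u v := Or.inl h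
    rw [hM1skel] at h2
    exact h2
  have hM2edge : ∀ {u v}, M2.E u v → u ∈ V2 ∧ v ∈ V2 ∧ G.Adj u v := by
    intro u v h
    have h2 : M2.skeleton.Adj u v := Or.inl h
    rw [hM2skel] at h2
    exact h2
  have hG1adj : ∀ {u v}, u ∈ V1 → v ∈ V1 → G.Adj u v → M1.adjE u v := by
    intro u v h1 h2 h3
    have h4 : M1.skeleton.Adj u v := by rw [hM1skel]; exact ⟨h1, h2, h3⟩
    exact h4
  have hG2adj : ∀ {u v}, u ∈ V2 → v ∈ V2 → G.Adj u v → M2.adjE u v := by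
    intro u v h1 h2 h3
    have h4 : M2.skeleton.Adj u v := by rw [hM2skel]; exact ⟨h1, h2, h3⟩
    exact h4
  have hKE12 : K.E r1 r2 := (hK r1 r2).2 (Or.inr (Or.inr ⟨rfl, rfl⟩))
  have hKnE21 : ¬ K.E r2 r1 := by
    rw [hK]
    rintro (h | h | ⟨h1, h2⟩)
    · exact hdisj r2 (hM1edge h).1 ha2
    · exact hdisj r1 ha1 (hM2edge h).2.1
    · exact hr12 h2
  have hKskel : K.skeleton = G := by
    ext u v
    constructor
    · rintro (h | h)
      · rw [hK] at h
        rcases h with h | h | ⟨h1, h2⟩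
        · exact (hM1edge h).2.2
        · exact (hM2edge h).2.2
        · rw [h1, h2]; exact hadj
      · rw [hK] at h
        rcases h with h | h | ⟨h1, h2⟩
        · exact (hM1edge h).2.2.symm
        · exact (hM2edge h).2.2.symm
        · rw [h1, h2]; exact hadj.symm
    · intro h
      rcases hcover u with hu | hu <;> rcases hcover v with hv | hv
      · rcases hG1adj hu hv h with h' | h'
        · exact Or.inl ((hK u v).2 (Or.inl h'))
        · exact Or.inr ((hK v u).2 (Or.inl h'))
      · rcases hcross u v h hu hv with ⟨e1, e2⟩
        exact Or.inl ((hK u v).2 (Or.inr (Or.inr ⟨e1, e2⟩)))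
      · rcases hcross v u h.symm hv hu with ⟨e1, e2⟩
        exact Or.inr ((hK v u).2 (Or.inr (Or.inr ⟨e1, e2⟩)))
      · rcases hG2adj hu hv h with h' | h'
        · exact Or.inl ((hK u v).2 (Or.inr (Or.inl h')))
        · exact Or.inr ((hK v u).2 (Or.inr (Or.inl h')))
  have hKadjG : ∀ {p q}, K.adjE p q → G.Adj p q := by
    intro p q h
    have h2 : K.skeleton.Adj p q := h
    rwa [hKskel] at h2
  have hKind1 : K.induce V1 = M1 := by
    apply MixedGraph.ext'
    intro u v
    constructor
    · rintro ⟨hu, hv, hE⟩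
      rw [hK] at hE
      rcases hE with h | h | ⟨h1, h2⟩
      · exact h
      · exact (hdisj u hu (hM2edge h).1).elim
      · exact (hdisj r2 (by rw [← h2]; exact hv) ha2).elim
    · intro h
      exact ⟨(hM1edge h).1, (hM1edge h).2.1, (hK u v).2 (Or.inl h)⟩
  have hKind2 : K.induce V2 = M2 := by
    apply MixedGraph.ext'
    intro u v
    constructor
    · rintro ⟨hu, hv, hE⟩
      rw [hK] at hE
      rcases hE with h | h | ⟨h1, h2⟩
      · exact (hdisj u (hM1edge h).1 hu).elim
      · exact h
      · exact (hdisj r1 ha1 (by rw [← h1]; exact hu)).elim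
    · intro h
      exact ⟨(hM2edge h).1, (hM2edge h).2.1, (hK u v).2 (Or.inr (Or.inl h))⟩
  have hKdir : ∀ u v, K.dirE u v ↔ (M1.dirE u v ∨ M2.dirE u v ∨ (u = r1 ∧ v = r2)) := by
    intro u v
    constructor
    · rintro ⟨hE, hnE⟩
      rw [hK] at hE
      rcases hE with h | h | hc
      · exact Or.inl ⟨h, fun h' => hnE ((hK v u).2 (Or.inl h'))⟩
      · exact Or.inr (Or.inl ⟨h, fun h' => hnE ((hK v u).2 (Or.inr (Or.inl h')))⟩)
      · exact Or.inr (Or.inr hc)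
    · rintro (h | h | ⟨h1, h2⟩)
      · refine ⟨(hK u v).2 (Or.inl h.1), ?_⟩
        rw [hK]
        rintro (h' | h' | ⟨e1, e2⟩)
        · exact h.2 h'
        · exact hdisj v (hM1edge h.1).2.1 (hM2edge h').1
        · exact hdisj u (hM1edge h.1).1 (by rw [e2]; exact ha2)
      · refine ⟨(hK u v).2 (Or.inr (Or.inl h.1)), ?_⟩
        rw [hK]
        rintro (h' | h' | ⟨e1, e2⟩)
        · exact hdisj v (hM1edge h').1 (hM2edge h.1).2.1
        · exact h.2 h'
        · exact hdisj v (by rw [e1]; exact ha1) (hM2edge h.1).2.1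
      · rw [h1, h2]
        exact ⟨hKE12, hKnE21⟩
  have hKundir : ∀ u v, K.undirE u v ↔ (M1.undirE u v ∨ M2.undirE u v) := by
    intro u v
    constructor
    · rintro ⟨h1, h2⟩
      rw [hK] at h1 h2
      rcases h1 with h1 | h1 | ⟨ha, hb⟩ <;> rcases h2 with h2 | h2 | ⟨hc, hd⟩
      · exact Or.inl ⟨h1, h2⟩
      · exact (hdisj u (hM1edge h1).1 (hM2edge h2).2.1).elim
      · exact (hdisj u (hM1edge h1).1 (by rw [hd]; exact ha2)).elim
      · exact (hdisj v (hM1edge h2).1 (hM2edge h1).2.1).elim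
      · exact Or.inr ⟨h1, h2⟩
      · exact (hdisj v (by rw [hc]; exact ha1) (hM2edge h1).2.1).elim
      · exact (hdisj v (hM1edge h2).1 (by rw [hb]; exact ha2)).elim
      · exact (hdisj u (by rw [ha]; exact ha1) (hM2edge h2).2.1).elim
      · exact (hr12 (ha.symm.trans hd)).elim
    · rintro (⟨h1, h2⟩ | ⟨h1, h2⟩)
      · exact ⟨(hK u v).2 (Or.inl h1), (hK v u).2 (Or.inl h2)⟩
      · exact ⟨(hK u v).2 (Or.inr (Or.inl h1)), (hK v u).2 (Or.inr (Or.inl h2))⟩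
  have hKadj1 : ∀ {p q}, p ∈ V1 → q ∈ V1 → K.adjE p q → M1.adjE p q := by
    intro p q hp hq h
    exact hG1adj hp hq (hKadjG h)
  have hKadj2 : ∀ {p q}, p ∈ V2 → q ∈ V2 → K.adjE p q → M2.adjE p q := by
    intro p q hp hq h
    exact hG2adj hp hq (hKadjG h)
  have hlift1 : ∀ {p q}, M1.adjE p q → K.adjE p q := by
    rintro p q (h | h)
    · exact Or.inl ((hK p q).2 (Or.inl h))
    · exact Or.inr ((hK q p).2 (Or.inl h))
  have hlift2 : ∀ {p q}, M2.adjE p q → K.adjE p q := by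
    rintro p q (h | h)
    · exact Or.inl ((hK p q).2 (Or.inr (Or.inl h)))
    · exact Or.inr ((hK q p).2 (Or.inr (Or.inl h)))
  have hMadjG1 : ∀ {p q}, M1.adjE p q → G.Adj p q := fun h => hKadjG (hlift1 h)
  have hMadjG2 : ∀ {p q}, M2.adjE p q → G.Adj p q := fun h => hKadjG (hlift2 h)
  have tdir1 : ∀ {p q}, M1.dirE p q → K.dirE p q := fun h => (hKdir _ _).2 (Or.inl h)
  have tdir2 : ∀ {p q}, M2.dirE p q → K.dirE p q := fun h => (hKdir _ _).2 (Or.inr (Or.inl h))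
  have tundir1 : ∀ {p q}, M1.undirE p q → K.undirE p q := fun h => (hKundir _ _).2 (Or.inl h)
  have tundir2 : ∀ {p q}, M2.undirE p q → K.undirE p q := fun h => (hKundir _ _).2 (Or.inr h)
  have hKmec : K.IsMEC := by
    refine ⟨?_, ?_, ?_, ?_⟩
    · refine chainGraph_of_acyclic hT.IsAcyclic K (fun u v h => ?_)
      have h2 : K.skeleton.Adj u v := Or.inl h
      rwa [hKskel] at h2
    · apply chordal_of_acyclic hT.IsAcyclic
      intro u v h
      exact hKadjG (Or.inl h.1)
    · intro a b c hd hu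
      rw [hKdir] at hd
      rw [hKundir] at hu
      rcases hu with hu | hu
      · rcases hd with hd | hd | ⟨h1, h2⟩
        · exact hlift1 (hM1mec.2.2.1 a b c hd hu)
        · exact (hdisj b (hM1edge hu.1).1 (hM2edge hd.1).2.1).elim
        · exact (hdisj b (hM1edge hu.1).1 (by rw [h2]; exact ha2)).elim
      · rcases hd with hd | hd | ⟨h1, h2⟩
        · exact (hdisj b (hM1edge hd.1).2.1 (hM2edge hu.1).1).elim
        · exact hlift2 (hM2mec.2.2.1 a b c hd hu)
        · have h3 := hM2mec.2.2.1 x2 b c (by rw [h2]; exact hx2) hu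
          have hxb : G.Adj x2 b := by rw [h2]; exact (hM2edge hx2.1).2.2
          exact (tree_no_triangle hT.IsAcyclic hxb (hM2edge hu.1).2.2 (hMadjG2 h3)).elim
    · intro u v hd
      rw [hKdir] at hd
      rcases hd with hd | hd | ⟨h1, h2⟩
      · rcases hM1mec.2.2.2 u v hd with ⟨w, hw1, hw2⟩ | ⟨w, hw1, hw2⟩ | ⟨w, hw1, hw2⟩ |
          ⟨w, w', hne, hwu, hw'u, hwv, hw'v, hnadj⟩
        · exact Or.inl ⟨w, tdir1 hw1,
            fun h => hw2 (hKadj1 (hM1edge hw1.1).1 (hM1edge hd.1).2.1 h)⟩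
        · exact Or.inr (Or.inl ⟨w, tdir1 hw1,
            fun h => hw2 (hKadj1 (hM1edge hd.1).1 (hM1edge hw1.1).1 h)⟩)
        · exact Or.inr (Or.inr (Or.inl ⟨w, tdir1 hw1, tdir1 hw2⟩))
        · exact Or.inr (Or.inr (Or.inr ⟨w, w', hne, tundir1 hwu, tundir1 hw'u, tdir1 hwv,
            tdir1 hw'v, fun h => hnadj (hKadj1 (hM1edge hwu.1).1 (hM1edge hw'u.1).1 h)⟩))
      · rcases hM2mec.2.2.2 u v hd with ⟨w, hw1, hw2⟩ | ⟨w, hw1, hw2⟩ | ⟨w, hw1, hw2⟩ |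
          ⟨w, w', hne, hwu, hw'u, hwv, hw'v, hnadj⟩
        · exact Or.inl ⟨w, tdir2 hw1,
            fun h => hw2 (hKadj2 (hM2edge hw1.1).1 (hM2edge hd.1).2.1 h)⟩
        · exact Or.inr (Or.inl ⟨w, tdir2 hw1,
            fun h => hw2 (hKadj2 (hM2edge hd.1).1 (hM2edge hw1.1).1 h)⟩)
        · exact Or.inr (Or.inr (Or.inl ⟨w, tdir2 hw1, tdir2 hw2⟩))
        · exact Or.inr (Or.inr (Or.inr ⟨w, w', hne, tundir2 hwu, tundir2 hw'u, tdir2 hwv,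
            tdir2 hw'v, fun h => hnadj (hKadj2 (hM2edge hwu.1).1 (hM2edge hw'u.1).1 h)⟩))
      · rw [h1, h2]
        exact Or.inl ⟨x1, tdir1 hx1,
          fun h => tree_no_triangle hT.IsAcyclic (hMadjG1 (Or.inl hx1.1)) hadj (hKadjG h)⟩
  exact ⟨⟨hKmec, hKskel⟩, hKind1, hKind2, (hKdir r1 r2).2 (Or.inr (Or.inr ⟨rfl, rfl⟩)), hKnE21⟩

lemma eq_build_E {G : SimpleGraph V} {r1 r2 : V} {V1 V2 : Set V}
    (hcover : ∀ v, v ∈ V1 ∨ v ∈ V2)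
    (hcross : ∀ u v, G.Adj u v → u ∈ V1 → v ∈ V2 → u = r1 ∧ v = r2)
    {M1 M2 : MixedGraph V}
    (M : MixedGraph V) (hMskel : M.skeleton = G)
    (h1 : M.induce V1 = M1) (h2 : M.induce V2 = M2)
    (hE12 : M.E r1 r2) (hnE21 : ¬ M.E r2 r1) :
    ∀ u v, M.E u v ↔ (M1.E u v ∨ M2.E u v ∨ (u = r1 ∧ v = r2)) := by
  intro u v
  constructor
  · intro h
    have hGadj : G.Adj u v := by
      have h3 : M.skeleton.Adj u v := Or.inl h
      rwa [hMskel] at h3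
    rcases hcover u with hu | hu <;> rcases hcover v with hv | hv
    · exact Or.inl (by rw [← h1]; exact ⟨hu, hv, h⟩)
    · obtain ⟨e1, e2⟩ := hcross u v hGadj hu hv
      exact Or.inr (Or.inr ⟨e1, e2⟩)
    · obtain ⟨e1, e2⟩ := hcross v u hGadj.symm hv hu
      exact (hnE21 (by rw [← e2, ← e1]; exact h)).elim
    · exact Or.inr (Or.inl (by rw [← h2]; exact ⟨hu, hv, h⟩))
  · rintro (h | h | ⟨e1, e2⟩)
    · rw [← h1] at h
      exact h.2.2
    · rw [← h2] at h
      exact h.2.2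
    · rw [e1, e2]
      exact hE12

end Build
theorem counting_M1_M1 {V : Type*} [Fintype V] [DecidableEq V]
    (G : SimpleGraph V) (hT : G.IsTree) (r1 r2 : V) (hadj : G.Adj r1 r2)
    (V1 V2 : Set V) (hV1 : V1 = cutSide G r1 r2) (hV2 : V2 = cutSide G r2 r1)
    (G1 G2 : SimpleGraph V) (hG1 : G1 = G.inducedOn V1) (hG2 : G2 = G.inducedOn V2)
    (M1 M2 : MixedGraph V) (hM1 : M1 ∈ MEC1 G1 r1) (hM2 : M2 ∈ MEC1 G2 r2)
    (S : Set (MixedGraph V))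
    (hS : S = {M | M ∈ MECset G ∧ IsProjection M V1 M1 ∧ IsProjection M V2 M2}) :
    S.ncard = 2 ∧ S ⊆ MEC1 G r1 := by
  subst hG1 hG2
  obtain ⟨⟨hM1mec, hM1skel⟩, x1, hx1⟩ := hM1
  obtain ⟨⟨hM2mec, hM2skel⟩, x2, hx2⟩ := hM2
  have hr12 : r1 ≠ r2 := hadj.ne
  -- basic cut facts
  have hr1V1 : r1 ∈ V1 := by rw [hV1]; exact cutSide_self G r1 r2
  have hr2V2 : r2 ∈ V2 := by rw [hV2]; exact cutSide_self G r2 r1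
  have hdisj : ∀ v, v ∈ V1 → v ∈ V2 → False := by
    intro v h1 h2
    rw [hV1] at h1
    rw [hV2] at h2
    exact cutSide_disjoint hT hadj v h1 h2
  have hcover : ∀ v, v ∈ V1 ∨ v ∈ V2 := by
    intro v
    rw [hV1, hV2]
    exact cutSide_cover hT v
  have hcross : ∀ u v, G.Adj u v → u ∈ V1 → v ∈ V2 → u = r1 ∧ v = r2 := by
    intro u v h hu hv
    rw [hV1] at hu
    rw [hV2] at hv
    exact cut_crossing hT hadj hu hv h
  have hcross' : ∀ u v, G.Adj u v → u ∈ V2 → v ∈ V1 → u = r2 ∧ v = r1 := by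
    intro u v h hu hv
    obtain ⟨e1, e2⟩ := hcross v u h.symm hv hu
    exact ⟨e2, e1⟩
  -- the two candidate MECs
  set Ma : MixedGraph V := crossJoin M1 M2 r1 r2 hr12 with hMadef
  set Mb : MixedGraph V := crossJoin M2 M1 r2 r1 hr12.symm with hMbdef
  have hKa : ∀ u v, Ma.E u v ↔ (M1.E u v ∨ M2.E u v ∨ (u = r1 ∧ v = r2)) :=
    crossJoin_E M1 M2 r1 r2 hr12
  have hKb : ∀ u v, Mb.E u v ↔ (M2.E u v ∨ M1.E u v ∨ (u = r2 ∧ v = r1)) :=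
    crossJoin_E M2 M1 r2 r1 hr12.symm
  obtain ⟨hMaMEC, hMaind1, hMaind2, hMadir, hMan⟩ :=
    build_MEC hT hadj hr1V1 hr2V2 hdisj hcover hcross hM1skel hM1mec hM2skel hM2mec
      hx1 hx2 Ma hKa
  obtain ⟨hMbMEC, hMbind2, hMbind1, hMbdir, hMbn⟩ :=
    build_MEC hT hadj.symm hr2V2 hr1V1 (fun v a b => hdisj v b a) (fun v => (hcover v).symm)
      hcross' hM2skel hM2mec hM1skel hM1mec hx2 hx1 Mb hKb
  -- projections are restrictions
  have hMadjG : ∀ (M : MixedGraph V), M.skeleton = G → ∀ u v, M.adjE u v ↔ G.Adj u v := by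
    intro M hMskel u v
    rw [← hMskel]
    exact Iff.rfl
  have hM1adj : ∀ u v, M1.adjE u v ↔ (u ∈ V1 ∧ v ∈ V1 ∧ G.Adj u v) := by
    intro u v
    show M1.skeleton.Adj u v ↔ _
    rw [hM1skel]
    exact Iff.rfl
  have hM2adj : ∀ u v, M2.adjE u v ↔ (u ∈ V2 ∧ v ∈ V2 ∧ G.Adj u v) := by
    intro u v
    show M2.skeleton.Adj u v ↔ _
    rw [hM2skel]
    exact Iff.rfl
  have hproj1 : ∀ M : MixedGraph V, M.skeleton = G →
      (IsProjection M V1 M1 ↔ M.induce V1 = M1) := by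
    intro M hMskel
    constructor
    · rintro ⟨hmem, hvs⟩
      apply MixedGraph.eq_of_skeleton_of_dirE
      · intro u v
        constructor
        · rintro (⟨hu, hv, h⟩ | ⟨hv, hu, h⟩)
          · exact (hM1adj u v).2 ⟨hu, hv, (hMadjG M hMskel u v).1 (Or.inl h)⟩
          · exact (hM1adj u v).2 ⟨hu, hv, (hMadjG M hMskel u v).1 (Or.inr h)⟩
        · intro h
          obtain ⟨hu, hv, hG⟩ := (hM1adj u v).1 h
          rcases (hMadjG M hMskel u v).2 hG with h' | h'
          · exact Or.inl ⟨hu, hv, h'⟩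
          · exact Or.inr ⟨hv, hu, h'⟩
      · intro u v
        rw [dirE_iff_mem_vstructs, dirE_iff_mem_vstructs, hvs]
    · intro h
      refine ⟨?_, by rw [h]⟩
      rw [hMskel]
      exact ⟨hM1mec, hM1skel⟩
  have hproj2 : ∀ M : MixedGraph V, M.skeleton = G →
      (IsProjection M V2 M2 ↔ M.induce V2 = M2) := by
    intro M hMskel
    constructor
    · rintro ⟨hmem, hvs⟩
      apply MixedGraph.eq_of_skeleton_of_dirE
      · intro u v
        constructor
        · rintro (⟨hu, hv, h⟩ | ⟨hv, hu, h⟩)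
          · exact (hM2adj u v).2 ⟨hu, hv, (hMadjG M hMskel u v).1 (Or.inl h)⟩
          · exact (hM2adj u v).2 ⟨hu, hv, (hMadjG M hMskel u v).1 (Or.inr h)⟩
        · intro h
          obtain ⟨hu, hv, hG⟩ := (hM2adj u v).1 h
          rcases (hMadjG M hMskel u v).2 hG with h' | h'
          · exact Or.inl ⟨hu, hv, h'⟩
          · exact Or.inr ⟨hv, hu, h'⟩
      · intro u v
        rw [dirE_iff_mem_vstructs, dirE_iff_mem_vstructs, hvs]
    · intro h
      refine ⟨?_, by rw [h]⟩
      rw [hMskel]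
      exact ⟨hM2mec, hM2skel⟩
  -- S is exactly the pair {Ma, Mb}
  have hSdesc : S = {Ma, Mb} := by
    rw [hS]
    ext M
    simp only [Set.mem_setOf_eq, Set.mem_insert_iff, Set.mem_singleton_iff]
    constructor
    · rintro ⟨hMmec, hp1, hp2⟩
      have hMskel : M.skeleton = G := hMmec.2
      have hind1 := (hproj1 M hMskel).1 hp1
      have hind2 := (hproj2 M hMskel).1 hp2
      have hMdx : M.dirE x1 r1 := dirE_of_induce (by rw [hind1]; exact hx1)
      have hadjM : M.adjE r1 r2 := (hMadjG M hMskel r1 r2).2 hadj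
      have hnboth : ¬ (M.E r1 r2 ∧ M.E r2 r1) := by
        rintro ⟨hb1, hb2⟩
        have hund := hMmec.1.2.2.1 x1 r1 r2 hMdx ⟨hb1, hb2⟩
        have hGx2 : G.Adj x1 r2 := (hMadjG M hMskel x1 r2).1 hund
        have hGx1 : G.Adj x1 r1 := (hMadjG M hMskel x1 r1).1 (Or.inl hMdx.1)
        exact tree_no_triangle hT.IsAcyclic hGx1 hadj hGx2
      rcases hadjM with hE | hE
      · left
        apply MixedGraph.ext'
        intro u v
        rw [eq_build_E hcover hcross M hMskel hind1 hind2 hE (fun h => hnboth ⟨hE, h⟩) u v]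
        exact (hKa u v).symm
      · right
        apply MixedGraph.ext'
        intro u v
        rw [eq_build_E (fun v => (hcover v).symm) hcross' M hMskel hind2 hind1 hE
          (fun h => hnboth ⟨h, hE⟩) u v]
        exact (hKb u v).symm
    · rintro (rfl | rfl)
      · exact ⟨hMaMEC, (hproj1 Ma hMaMEC.2).2 hMaind1, (hproj2 Ma hMaMEC.2).2 hMaind2⟩
      · exact ⟨hMbMEC, (hproj1 Mb hMbMEC.2).2 hMbind1, (hproj2 Mb hMbMEC.2).2 hMbind2⟩
  have hne : Ma ≠ Mb := by
    intro h
    apply hMbn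
    rw [← h]
    exact hMadir.1
  constructor
  · rw [hSdesc]
    exact Set.ncard_pair hne
  · intro M hM
    rw [hSdesc] at hM
    simp only [Set.mem_insert_iff, Set.mem_singleton_iff] at hM
    rcases hM with rfl | rfl
    · exact ⟨hMaMEC, x1, dirE_of_induce (by rw [hMaind1]; exact hx1)⟩
    · exact ⟨hMbMEC, x1, dirE_of_induce (by rw [hMbind1]; exact hx1)⟩
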